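/- arXiv:1407.3928 — 7 statements merged into one kernel-verified Lean document; each statement's English description precedes it below -/
import Mathlib

section
/- Let A be a ring and ∂, ∂̄ : A → A additive maps with ∂∘∂ = 0, ∂̄∘∂̄ = 0 and ∂∘∂̄ + ∂̄∘∂ = 0. Let θ₁, θ₂, η₁, η₂ ∈ A be elements such that: (i) each of them is killed by both ∂ and ∂̄; (ii) any two of them (including an element with itself) anticommute, i.e. α·β = −β·α, and each squares to zero; (iii) each α among them satisfies the degree-one Leibniz rules ∂(α·x) = (∂α)·x − α·(∂x) and ∂̄(α·x) = (∂̄α)·x − α·(∂̄x) for all x ∈ A. Define ∂' := ∂ + L_{θ₂} + L_{η₁} and ∂̄' := ∂̄ − L_{η₂} + L_{θ₁}, where L_α(x) := α·x. Then ∂'∘∂' = 0, ∂̄'∘∂̄' = 0 and ∂'∘∂̄' + ∂̄'∘∂' = 0. -/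
/-- Given two anticommuting differentials `∂, ∂̄` on a ring `A` and elements
`θ₁, θ₂, η₁, η₂` which are closed under both differentials, pairwise anticommute,
square to zero, and satisfy the degree-one Leibniz rules, the twisted operators
`∂' := ∂ + L_{θ₂} + L_{η₁}` and `∂̄' := ∂̄ − L_{η₂} + L_{θ₁}` satisfy
`∂'∘∂' = 0`, `∂̄'∘∂̄' = 0` and `∂'∘∂̄' + ∂̄'∘∂' = 0`. -/
theorem stmt1 {A : Type*} [Ring A] (del delbar : A → A)
    (haddd : ∀ x y : A, del (x + y) = del x + del y)
    (hadddb : ∀ x y : A, delbar (x + y) = delbar x + delbar y)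
    (hd2 : ∀ x : A, del (del x) = 0)
    (hdb2 : ∀ x : A, delbar (delbar x) = 0)
    (hanti : ∀ x : A, del (delbar x) + delbar (del x) = 0)
    (θ₁ θ₂ η₁ η₂ : A)
    (hclosed : ∀ α ∈ ({θ₁, θ₂, η₁, η₂} : Set A), del α = 0 ∧ delbar α = 0)
    (hacomm : ∀ α ∈ ({θ₁, θ₂, η₁, η₂} : Set A), ∀ β ∈ ({θ₁, θ₂, η₁, η₂} : Set A),
      α * β = -(β * α))
    (hsq : ∀ α ∈ ({θ₁, θ₂, η₁, η₂} : Set A), α * α = 0)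
    (hLeib : ∀ α ∈ ({θ₁, θ₂, η₁, η₂} : Set A), ∀ x : A,
      del (α * x) = del α * x - α * del x ∧ delbar (α * x) = delbar α * x - α * delbar x) :
    (∀ x : A, (fun y => del y + θ₂ * y + η₁ * y) ((fun y => del y + θ₂ * y + η₁ * y) x) = 0) ∧
    (∀ x : A, (fun y => delbar y - η₂ * y + θ₁ * y) ((fun y => delbar y - η₂ * y + θ₁ * y) x) = 0) ∧
    (∀ x : A, (fun y => del y + θ₂ * y + η₁ * y) ((fun y => delbar y - η₂ * y + θ₁ * y) x)
      + (fun y => delbar y - η₂ * y + θ₁ * y) ((fun y => del y + θ₂ * y + η₁ * y) x) = 0) := by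
  have m1 : θ₁ ∈ ({θ₁, θ₂, η₁, η₂} : Set A) := by simp
  have m2 : θ₂ ∈ ({θ₁, θ₂, η₁, η₂} : Set A) := by simp
  have m3 : η₁ ∈ ({θ₁, θ₂, η₁, η₂} : Set A) := by simp
  have m4 : η₂ ∈ ({θ₁, θ₂, η₁, η₂} : Set A) := by simp
  have hd0 : del 0 = 0 := by have := haddd 0 0; simpa using this.symm
  have hdb0 : delbar 0 = 0 := by have := hadddb 0 0; simpa using this.symm
  have hdneg : ∀ y : A, del (-y) = -del y := by
    intro y
    have h := haddd y (-y)
    rw [add_neg_cancel, hd0] at h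
    exact eq_neg_of_add_eq_zero_right h.symm
  have hdbneg : ∀ y : A, delbar (-y) = -delbar y := by
    intro y
    have h := hadddb y (-y)
    rw [add_neg_cancel, hdb0] at h
    exact eq_neg_of_add_eq_zero_right h.symm
  have hanti' : ∀ x : A, del (delbar x) = -delbar (del x) :=
    fun x => eq_neg_of_add_eq_zero_left (hanti x)
  -- simplified Leibniz rules
  have Ld : ∀ α ∈ ({θ₁, θ₂, η₁, η₂} : Set A), ∀ x : A, del (α * x) = -(α * del x) := by
    intro α hα x
    rw [(hLeib α hα x).1, (hclosed α hα).1, zero_mul, zero_sub]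
  have Ldb : ∀ α ∈ ({θ₁, θ₂, η₁, η₂} : Set A), ∀ x : A, delbar (α * x) = -(α * delbar x) := by
    intro α hα x
    rw [(hLeib α hα x).2, (hclosed α hα).2, zero_mul, zero_sub]
  refine ⟨?_, ?_, ?_⟩ <;> intro x <;>
    simp only [sub_eq_add_neg, haddd, hadddb, hdneg, hdbneg, hd2, hdb2, hanti',
      Ld θ₁ m1, Ld θ₂ m2, Ld η₁ m3, Ld η₂ m4,
      Ldb θ₁ m1, Ldb θ₂ m2, Ldb η₁ m3, Ldb η₂ m4,
      mul_add, mul_neg, neg_mul, neg_neg, ← mul_assoc,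
      hsq θ₁ m1, hsq θ₂ m2, hsq η₁ m3, hsq η₂ m4,
      hacomm η₁ m3 θ₂ m2, hacomm θ₁ m1 η₂ m4,
      hacomm η₁ m3 θ₁ m1, hacomm θ₂ m2 η₂ m4, hacomm θ₂ m2 θ₁ m1, hacomm η₁ m3 η₂ m4,
      zero_mul, neg_zero, add_zero, zero_add] <;>
    abel
end

section
/- Let (V^k)_{k∈ℤ} be a family of complex vector spaces together with linear maps ∂ : V^k → V^{k+1} and ∂̄ : V^k → V^{k+1} satisfying ∂∘∂ = 0, ∂̄∘∂̄ = 0 and ∂∘∂̄ + ∂̄∘∂ = 0. Suppose that in every degree j the cohomologies H^j_∂ := ker(∂ : V^j → V^{j+1})/∂(V^{j−1}) and H^j_∂̄ := ker(∂̄ : V^j → V^{j+1})/∂̄(V^{j−1}), as well as H^j_BC := (ker ∂ ∩ ker ∂̄ in V^j)/(∂∂̄)(V^{j−2}) and H^j_A := ker(∂∂̄ : V^j → V^{j+2})/(∂(V^{j−1}) + ∂̄(V^{j−1})), are finite dimensional. Then for every k ∈ ℤ the inequality dim H^k_BC + dim H^k_A ≥ dim H^k_∂ + dim H^k_∂̄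 holds. -/
open LinearMap Submodule Module

set_option maxHeartbeats 1000000

/-- Frölicher-type inequality for a ℤ-graded complex vector space with two
anticommuting degree-one differentials `∂, ∂̄`: in every degree, if the
Dolbeault-type, Bott–Chern and Aeppli cohomologies are finite dimensional, then
`dim H_BC + dim H_A ≥ dim H_∂ + dim H_∂̄`.  (The arbitrary degree is written as
`k + 1 + 1` so that all indices match syntactically.) -/
theorem stmt2 (V : ℤ → Type*) [∀ k, AddCommGroup (V k)] [∀ k, Module ℂ (V k)]
    (del delbar : ∀ k, V k →ₗ[ℂ] V (k + 1))
    (hdel : ∀ k, (del (k + 1)).comp (del k) = 0)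
    (hdelbar : ∀ k, (delbar (k + 1)).comp (delbar k) = 0)
    (hanti : ∀ k, (del (k + 1)).comp (delbar k) + (delbar (k + 1)).comp (del k) = 0)
    (hfindel : ∀ k : ℤ, FiniteDimensional ℂ
      (↥(ker (del (k + 1 + 1))) ⧸
        ((range (del (k + 1))).comap (ker (del (k + 1 + 1))).subtype)))
    (hfindelbar : ∀ k : ℤ, FiniteDimensional ℂ
      (↥(ker (delbar (k + 1 + 1))) ⧸
        ((range (delbar (k + 1))).comap (ker (delbar (k + 1 + 1))).subtype)))
    (hfinBC : ∀ k : ℤ, FiniteDimensional ℂ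
      (↥(ker (del (k + 1 + 1)) ⊓ ker (delbar (k + 1 + 1))) ⧸
        ((range ((del (k + 1)).comp (delbar k))).comap
          (ker (del (k + 1 + 1)) ⊓ ker (delbar (k + 1 + 1))).subtype)))
    (hfinA : ∀ k : ℤ, FiniteDimensional ℂ
      (↥(ker ((del (k + 1 + 1 + 1)).comp (delbar (k + 1 + 1)))) ⧸
        ((range (del (k + 1)) ⊔ range (delbar (k + 1))).comap
          (ker ((del (k + 1 + 1 + 1)).comp (delbar (k + 1 + 1)))).subtype))) :
    ∀ k : ℤ,
      finrank ℂ (↥(ker (del (k + 1 + 1))) ⧸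
          ((range (del (k + 1))).comap (ker (del (k + 1 + 1))).subtype))
        + finrank ℂ (↥(ker (delbar (k + 1 + 1))) ⧸
          ((range (delbar (k + 1))).comap (ker (delbar (k + 1 + 1))).subtype))
      ≤ finrank ℂ (↥(ker (del (k + 1 + 1)) ⊓ ker (delbar (k + 1 + 1))) ⧸
          ((range ((del (k + 1)).comp (delbar k))).comap
            (ker (del (k + 1 + 1)) ⊓ ker (delbar (k + 1 + 1))).subtype))
        + finrank ℂ (↥(ker ((del (k + 1 + 1 + 1)).comp (delbar (k + 1 + 1)))) ⧸
          ((range (del (k + 1)) ⊔ range (delbar (k + 1))).comap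
            (ker ((del (k + 1 + 1 + 1)).comp (delbar (k + 1 + 1)))).subtype)) := by
  intro k
  haveI := hfindel k
  haveI := hfindelbar k
  haveI := hfinBC k
  haveI := hfinA k
  set K1 : Submodule ℂ (V (k + 1 + 1)) := ker (del (k + 1 + 1)) with hK1def
  set K2 : Submodule ℂ (V (k + 1 + 1)) := ker (delbar (k + 1 + 1)) with hK2def
  set KB : Submodule ℂ (V (k + 1 + 1)) :=
    ker (del (k + 1 + 1)) ⊓ ker (delbar (k + 1 + 1)) with hKBdef
  set KA : Submodule ℂ (V (k + 1 + 1)) :=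
    ker ((del (k + 1 + 1 + 1)).comp (delbar (k + 1 + 1))) with hKAdef
  set I1 : Submodule ℂ K1 := (range (del (k + 1))).comap K1.subtype with hI1def
  set I2 : Submodule ℂ K2 := (range (delbar (k + 1))).comap K2.subtype with hI2def
  set IB : Submodule ℂ KB :=
    (range ((del (k + 1)).comp (delbar k))).comap KB.subtype with hIBdef
  set IA : Submodule ℂ KA :=
    (range (del (k + 1)) ⊔ range (delbar (k + 1))).comap KA.subtype with hIAdef
  have hB1 : KB ≤ K1 := inf_le_left
  have hB2 : KB ≤ K2 := inf_le_right
  have h1A : K1 ≤ KA := by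
    intro x hx
    rw [hK1def, mem_ker] at hx
    have h := LinearMap.congr_fun (hanti (k + 1 + 1)) x
    simp only [LinearMap.add_apply, LinearMap.comp_apply, LinearMap.zero_apply, hx,
      map_zero, add_zero] at h
    rw [hKAdef, mem_ker, LinearMap.comp_apply]
    exact h
  have h2A : K2 ≤ KA := by
    intro x hx
    rw [hK2def, mem_ker] at hx
    rw [hKAdef, mem_ker, LinearMap.comp_apply, hx, map_zero]
  -- the map f : H_BC → H_∂ × H_∂̄
  let f0 : KB →ₗ[ℂ] (K1 ⧸ I1) × (K2 ⧸ I2) :=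
    LinearMap.prod (I1.mkQ.comp (Submodule.inclusion hB1))
      (I2.mkQ.comp (Submodule.inclusion hB2))
  have hf0 : IB ≤ ker f0 := by
    intro x hx
    rw [hIBdef, Submodule.mem_comap] at hx
    obtain ⟨y, hy⟩ := hx
    rw [LinearMap.comp_apply] at hy
    have h1 : (Submodule.inclusion hB1 x : K1) ∈ I1 := by
      rw [hI1def, Submodule.mem_comap]
      exact ⟨delbar k y, hy⟩
    have h2 : (Submodule.inclusion hB2 x : K2) ∈ I2 := by
      rw [hI2def, Submodule.mem_comap]
      refine ⟨-(del k y), ?_⟩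
      have h := LinearMap.congr_fun (hanti k) y
      simp only [LinearMap.add_apply, LinearMap.comp_apply, LinearMap.zero_apply] at h
      rw [map_neg, neg_eq_of_add_eq_zero_left h]
      exact hy
    rw [mem_ker]
    have hval : f0 x = (I1.mkQ (Submodule.inclusion hB1 x),
        I2.mkQ (Submodule.inclusion hB2 x)) := rfl
    rw [hval, Prod.mk_eq_zero]
    constructor
    · rw [Submodule.mkQ_apply, Submodule.Quotient.mk_eq_zero]; exact h1
    · rw [Submodule.mkQ_apply, Submodule.Quotient.mk_eq_zero]; exact h2
  let f : (KB ⧸ IB) →ₗ[ℂ] (K1 ⧸ I1) × (K2 ⧸ I2) := IB.liftQ f0 hf0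
  -- the maps g1 : H_∂ → H_A, g2 : H_∂̄ → H_A
  have hg10 : I1 ≤ ker (IA.mkQ.comp (Submodule.inclusion h1A)) := by
    intro x hx
    rw [hI1def, Submodule.mem_comap] at hx
    rw [mem_ker, LinearMap.comp_apply, Submodule.mkQ_apply, Submodule.Quotient.mk_eq_zero,
      hIAdef, Submodule.mem_comap]
    exact Submodule.mem_sup_left hx
  have hg20 : I2 ≤ ker (IA.mkQ.comp (Submodule.inclusion h2A)) := by
    intro x hx
    rw [hI2def, Submodule.mem_comap] at hx
    rw [mem_ker, LinearMap.comp_apply, Submodule.mkQ_apply, Submodule.Quotient.mk_eq_zero,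
      hIAdef, Submodule.mem_comap]
    exact Submodule.mem_sup_right hx
  let g1 : (K1 ⧸ I1) →ₗ[ℂ] (KA ⧸ IA) :=
    I1.liftQ (IA.mkQ.comp (Submodule.inclusion h1A)) hg10
  let g2 : (K2 ⧸ I2) →ₗ[ℂ] (KA ⧸ IA) :=
    I2.liftQ (IA.mkQ.comp (Submodule.inclusion h2A)) hg20
  let g : ((K1 ⧸ I1) × (K2 ⧸ I2)) →ₗ[ℂ] (KA ⧸ IA) :=
    g1.comp (LinearMap.fst ℂ _ _) - g2.comp (LinearMap.snd ℂ _ _)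
  -- exactness : ker g ≤ range f
  have hker : ker g ≤ range f := by
    rintro ⟨qa, qb⟩ hab
    obtain ⟨a, rfl⟩ := I1.mkQ_surjective qa
    obtain ⟨b, rfl⟩ := I2.mkQ_surjective qb
    rw [mem_ker] at hab
    have hab' : g1 (I1.mkQ a) - g2 (I2.mkQ b) = 0 := hab
    have hab'' : IA.mkQ (Submodule.inclusion h1A a) - IA.mkQ (Submodule.inclusion h2A b)
        = 0 := hab'
    rw [← map_sub, Submodule.mkQ_apply, Submodule.Quotient.mk_eq_zero, hIAdef,
      Submodule.mem_comap] at hab''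
    have hmem : ((a : V (k + 1 + 1)) - (b : V (k + 1 + 1)))
        ∈ range (del (k + 1)) ⊔ range (delbar (k + 1)) := hab''
    obtain ⟨u', hu, v', hv, huv⟩ := Submodule.mem_sup.mp hmem
    obtain ⟨u, rfl⟩ := hu
    obtain ⟨v, rfl⟩ := hv
    have ha1 : del (k + 1 + 1) (a : V (k + 1 + 1)) = 0 := a.2
    have hb2 : delbar (k + 1 + 1) (b : V (k + 1 + 1)) = 0 := b.2
    have hx2 : (a : V (k + 1 + 1)) - del (k + 1) u
        = (b : V (k + 1 + 1)) + delbar (k + 1) v := by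
      have h' : (a : V (k + 1 + 1)) - (b : V (k + 1 + 1))
          = del (k + 1) u + delbar (k + 1) v := huv.symm
      rw [sub_eq_iff_eq_add] at h' ⊢
      rw [h']
      abel
    have hd : del (k + 1 + 1) ((a : V (k + 1 + 1)) - del (k + 1) u) = 0 := by
      rw [map_sub, ha1, zero_sub, neg_eq_zero]
      exact LinearMap.congr_fun (hdel (k + 1)) u
    have hdb : delbar (k + 1 + 1) ((a : V (k + 1 + 1)) - del (k + 1) u) = 0 := by
      rw [hx2, map_add, hb2, zero_add]
      exact LinearMap.congr_fun (hdelbar (k + 1)) v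
    have hxKB : (a : V (k + 1 + 1)) - del (k + 1) u ∈ KB :=
      Submodule.mem_inf.mpr ⟨mem_ker.mpr hd, mem_ker.mpr hdb⟩
    refine ⟨IB.mkQ ⟨_, hxKB⟩, ?_⟩
    have hfval : f (IB.mkQ ⟨_, hxKB⟩)
        = (I1.mkQ (Submodule.inclusion hB1 ⟨_, hxKB⟩),
           I2.mkQ (Submodule.inclusion hB2 ⟨_, hxKB⟩)) := rfl
    rw [hfval, Prod.mk.injEq]
    constructor
    · rw [Submodule.mkQ_apply, Submodule.mkQ_apply, Submodule.Quotient.eq, hI1def,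
        Submodule.mem_comap]
      refine ⟨-u, ?_⟩
      rw [map_neg]
      show -(del (k + 1) u)
          = ((Submodule.inclusion hB1 ⟨_, hxKB⟩ : K1) : V (k + 1 + 1)) - a
      rw [Submodule.coe_inclusion]
      show -(del (k + 1) u) = ((a : V (k + 1 + 1)) - del (k + 1) u) - a
      abel
    · rw [Submodule.mkQ_apply, Submodule.mkQ_apply, Submodule.Quotient.eq, hI2def,
        Submodule.mem_comap]
      refine ⟨v, ?_⟩
      show delbar (k + 1) v
          = ((Submodule.inclusion hB2 ⟨_, hxKB⟩ : K2) : V (k + 1 + 1)) - b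
      rw [Submodule.coe_inclusion]
      show delbar (k + 1) v = ((a : V (k + 1 + 1)) - del (k + 1) u) - b
      rw [hx2]; abel
  -- dimension count
  have hrange : finrank ℂ (range g) ≤ finrank ℂ (KA ⧸ IA) := Submodule.finrank_le _
  have hkerle : finrank ℂ (ker g) ≤ finrank ℂ (KB ⧸ IB) := by
    calc finrank ℂ (ker g) ≤ finrank ℂ (range f) := Submodule.finrank_mono hker
      _ ≤ finrank ℂ (KB ⧸ IB) := LinearMap.finrank_range_le f
  have hsplit : finrank ℂ (range g) + finrank ℂ (ker g)
      = finrank ℂ ((K1 ⧸ I1) × (K2 ⧸ I2)) := LinearMap.finrank_range_add_finrank_ker g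
  have hprod : finrank ℂ ((K1 ⧸ I1) × (K2 ⧸ I2))
      = finrank ℂ (K1 ⧸ I1) + finrank ℂ (K2 ⧸ I2) := Module.finrank_prod
  omega
end

section
/- Under the Kähler identities, the Bott–Chern Laplacian Δ_BC := (∂∂̄)(∂̄*∂*) + (∂̄*∂*)(∂∂̄) + (∂̄*∂)(∂*∂̄) + (∂*∂̄)(∂̄*∂) + ∂̄*∂̄ + ∂*∂ satisfies Δ_BC = Δ_∂̄² + ∂*∂ + ∂̄*∂̄, where Δ_∂̄² = Δ_∂̄ ∘ Δ_∂̄. -/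
open LinearMap

/-- Under the Kähler identities, the Bott–Chern Laplacian
`Δ_BC = (∂∂̄)(∂̄*∂*) + (∂̄*∂*)(∂∂̄) + (∂̄*∂)(∂*∂̄) + (∂*∂̄)(∂̄*∂) + ∂̄*∂̄ + ∂*∂`
satisfies `Δ_BC = Δ_∂̄² + ∂*∂ + ∂̄*∂̄`. -/
theorem stmt10 {V : Type*} [AddCommGroup V] [Module ℂ V]
    (p q ps qs Lam : V →ₗ[ℂ] V)
    (hp : p ∘ₗ p = 0) (hq : q ∘ₗ q = 0) (hpq : p ∘ₗ q + q ∘ₗ p = 0)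
    (hps : ps ∘ₗ ps = 0) (hqs : qs ∘ₗ qs = 0) (hpsqs : ps ∘ₗ qs + qs ∘ₗ ps = 0)
    (hk1 : Lam ∘ₗ p - p ∘ₗ Lam = Complex.I • qs)
    (hk2 : Lam ∘ₗ q - q ∘ₗ Lam = (-Complex.I) • ps) :
    (p ∘ₗ q) ∘ₗ (qs ∘ₗ ps) + (qs ∘ₗ ps) ∘ₗ (p ∘ₗ q)
      + (qs ∘ₗ p) ∘ₗ (ps ∘ₗ q) + (ps ∘ₗ q) ∘ₗ (qs ∘ₗ p)
      + qs ∘ₗ q + ps ∘ₗ p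
    = (q ∘ₗ qs + qs ∘ₗ q) ∘ₗ (q ∘ₗ qs + qs ∘ₗ q) + ps ∘ₗ p + qs ∘ₗ q := by
  simp only [← Module.End.mul_eq_comp] at *
  -- p anticommutes with qs
  have h1 : p * qs = -(qs * p) := by
    have h : Complex.I • (p * qs + qs * p) = 0 := by
      linear_combination (norm := (noncomm_ring; match_scalars <;> norm_num))
        -(p * hk1) - hk1 * p - hp * Lam + Lam * hp
    have h0 : p * qs + qs * p = 0 := by
      rcases smul_eq_zero.mp h with h' | h'
      · exact absurd h' Complex.I_ne_zero
      · exact h'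
    exact eq_neg_of_add_eq_zero_left h0
  -- q anticommutes with ps
  have h2 : q * ps = -(ps * q) := by
    have h : Complex.I • (q * ps + ps * q) = 0 := by
      linear_combination (norm := (noncomm_ring; match_scalars <;> norm_num))
        q * hk2 + hk2 * q + hq * Lam - Lam * hq
    have h0 : q * ps + ps * q = 0 := by
      rcases smul_eq_zero.mp h with h' | h'
      · exact absurd h' Complex.I_ne_zero
      · exact h'
    exact eq_neg_of_add_eq_zero_left h0
  -- the two Laplacians agree
  have h3 : p * ps + ps * p = q * qs + qs * q := by
    have h : Complex.I • (p * ps + ps * p - (q * qs + qs * q)) = 0 := by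
      linear_combination (norm := (noncomm_ring; match_scalars <;> norm_num))
        p * hk2 + hk2 * p + q * hk1 + hk1 * q - Lam * hpq + hpq * Lam
    have h0 : p * ps + ps * p - (q * qs + qs * q) = 0 := by
      rcases smul_eq_zero.mp h with h' | h'
      · exact absurd h' Complex.I_ne_zero
      · exact h'
    exact sub_eq_zero.mp h0
  -- the ∂̄-Laplacian commutes with p and with ps
  have c1 : p * (q * qs + qs * q) = (q * qs + qs * q) * p := by
    linear_combination (norm := noncomm_ring) h1 * q - q * h1 + hpq * qs - qs * hpq
  have c2 : ps * (q * qs + qs * q) = (q * qs + qs * q) * ps := by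
    linear_combination (norm := noncomm_ring) hpsqs * q - q * hpsqs + h2 * qs - qs * h2
  linear_combination (norm := noncomm_ring)
    c1 * ps + c2 * p + (q * qs + qs * q) * h3 - h1 * (q * ps) + (qs * p) * h2
      - hpsqs * (q * p) + (qs * ps) * hpq
end

section
/- Under the Kähler identities, the Aeppli Laplacian Δ_A := ∂∂* + ∂̄∂̄* + (∂̄*∂*)(∂∂̄) + (∂∂̄)(∂̄*∂*) + (∂∂̄*)(∂̄∂*) + (∂̄∂*)(∂∂̄*) satisfies Δ_A = Δ_∂̄² + ∂∂* + ∂̄∂̄*, where Δ_∂̄² = Δ_∂̄ ∘ Δ_∂̄. -/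
open LinearMap

/-- Under the Kähler identities, the Aeppli Laplacian
`Δ_A = ∂∂* + ∂̄∂̄* + (∂̄*∂*)(∂∂̄) + (∂∂̄)(∂̄*∂*) + (∂∂̄*)(∂̄∂*) + (∂̄∂*)(∂∂̄*)`
satisfies `Δ_A = Δ_∂̄² + ∂∂* + ∂̄∂̄*`. -/
theorem stmt11 {V : Type*} [AddCommGroup V] [Module ℂ V]
    (p q ps qs Lam : V →ₗ[ℂ] V)
    (hp : p ∘ₗ p = 0) (hq : q ∘ₗ q = 0) (hpq : p ∘ₗ q + q ∘ₗ p = 0)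
    (hps : ps ∘ₗ ps = 0) (hqs : qs ∘ₗ qs = 0) (hpsqs : ps ∘ₗ qs + qs ∘ₗ ps = 0)
    (hk1 : Lam ∘ₗ p - p ∘ₗ Lam = Complex.I • qs)
    (hk2 : Lam ∘ₗ q - q ∘ₗ Lam = (-Complex.I) • ps) :
    p ∘ₗ ps + q ∘ₗ qs
      + (qs ∘ₗ ps) ∘ₗ (p ∘ₗ q) + (p ∘ₗ q) ∘ₗ (qs ∘ₗ ps)
      + (p ∘ₗ qs) ∘ₗ (q ∘ₗ ps) + (q ∘ₗ ps) ∘ₗ (p ∘ₗ qs)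
    = (q ∘ₗ qs + qs ∘ₗ q) ∘ₗ (q ∘ₗ qs + qs ∘ₗ q) + p ∘ₗ ps + q ∘ₗ qs := by
  simp only [← Module.End.mul_eq_comp] at *
  have e1 : Complex.I • (p * qs + qs * p) = 0 := by
    calc Complex.I • (p * qs + qs * p)
        = p * (Complex.I • qs) + (Complex.I • qs) * p := by
          simp [mul_smul_comm, smul_mul_assoc, smul_add]
      _ = p * (Lam * p - p * Lam) + (Lam * p - p * Lam) * p := by rw [hk1]
      _ = 0 := by linear_combination (norm := noncomm_ring) Lam * hp - hp * Lam
  have h1 : p * qs + qs * p = 0 :=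
    (smul_eq_zero.mp e1).resolve_left Complex.I_ne_zero
  have e2 : (-Complex.I) • (q * ps + ps * q) = 0 := by
    calc (-Complex.I) • (q * ps + ps * q)
        = q * ((-Complex.I) • ps) + ((-Complex.I) • ps) * q := by
          simp [mul_smul_comm, smul_mul_assoc, smul_add]
      _ = q * (Lam * q - q * Lam) + (Lam * q - q * Lam) * q := by rw [hk2]
      _ = 0 := by linear_combination (norm := noncomm_ring) Lam * hq - hq * Lam
  have h2 : q * ps + ps * q = 0 :=
    (smul_eq_zero.mp e2).resolve_left (neg_ne_zero.mpr Complex.I_ne_zero)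
  have e3 : Complex.I • ((q * qs + qs * q) - (p * ps + ps * p)) = 0 := by
    calc Complex.I • ((q * qs + qs * q) - (p * ps + ps * p))
        = (p * ((-Complex.I) • ps) + ((-Complex.I) • ps) * p)
          + (q * (Complex.I • qs) + (Complex.I • qs) * q) := by
          simp only [mul_smul_comm, smul_mul_assoc]
          module
      _ = (p * (Lam * q - q * Lam) + (Lam * q - q * Lam) * p)
          + (q * (Lam * p - p * Lam) + (Lam * p - p * Lam) * q) := by rw [hk1, hk2]
      _ = 0 := by linear_combination (norm := noncomm_ring) Lam * hpq - hpq * Lam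
  have h3 : p * ps + ps * p = q * qs + qs * q :=
    (sub_eq_zero.mp ((smul_eq_zero.mp e3).resolve_left Complex.I_ne_zero)).symm
  linear_combination (norm := noncomm_ring)
    h3 * (q * qs + qs * q) + p * q * hpsqs - p * h2 * qs + p * qs * h2
      - p * hpsqs * q + h2 * (p * qs) - ps * hpq * qs + hpsqs * (p * q) - ps * h1 * q
end

section
/- The kernel of the Bott–Chern Laplacian is given by ker Δ_BC = ker ∂ ∩ ker ∂̄ ∩ ker((∂∂̄)*), where (∂∂̄)* is the adjoint of the composite ∂∘∂̄. -/
open LinearMap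
open scoped InnerProductSpace

private lemma auxTT {V : Type*} [NormedAddCommGroup V] [InnerProductSpace ℂ V]
    [FiniteDimensional ℂ V] (T : V →ₗ[ℂ] V) (x : V) :
    ⟪(adjoint T ∘ₗ T) x, x⟫_ℂ = (‖T x‖^2 : ℂ) := by
  simp [adjoint_inner_left, inner_self_eq_norm_sq_to_K]

/-- In a finite-dimensional complex inner product space, the kernel of the
Bott–Chern Laplacian
`Δ_BC = (∂∂̄)(∂∂̄)* + (∂∂̄)*(∂∂̄) + (∂̄*∂)(∂̄*∂)* + (∂̄*∂)*(∂̄*∂) + ∂̄*∂̄ + ∂*∂`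
is `ker ∂ ∩ ker ∂̄ ∩ ker((∂∂̄)*)`. -/
theorem stmt12 {V : Type*} [NormedAddCommGroup V] [InnerProductSpace ℂ V]
    [FiniteDimensional ℂ V]
    (p q : V →ₗ[ℂ] V)
    (hp : p ∘ₗ p = 0) (hq : q ∘ₗ q = 0) (hpq : p ∘ₗ q + q ∘ₗ p = 0) :
    ker ((p ∘ₗ q) ∘ₗ adjoint (p ∘ₗ q) + adjoint (p ∘ₗ q) ∘ₗ (p ∘ₗ q)
        + (adjoint q ∘ₗ p) ∘ₗ adjoint (adjoint q ∘ₗ p)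
        + adjoint (adjoint q ∘ₗ p) ∘ₗ (adjoint q ∘ₗ p)
        + adjoint q ∘ₗ q + adjoint p ∘ₗ p)
      = ker p ⊓ ker q ⊓ ker (adjoint (p ∘ₗ q)) := by
  set A := p ∘ₗ q with hA
  set B := adjoint q ∘ₗ p with hB
  ext x
  constructor
  · intro hx
    have hx' : (A ∘ₗ adjoint A + adjoint A ∘ₗ A + B ∘ₗ adjoint B + adjoint B ∘ₗ B
        + adjoint q ∘ₗ q + adjoint p ∘ₗ p) x = 0 := hx
    have h0 : ⟪(A ∘ₗ adjoint A + adjoint A ∘ₗ A + B ∘ₗ adjoint B + adjoint B ∘ₗ B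
        + adjoint q ∘ₗ q + adjoint p ∘ₗ p) x, x⟫_ℂ = 0 := by
      rw [hx']; simp
    have hexp : ⟪(A ∘ₗ adjoint A + adjoint A ∘ₗ A + B ∘ₗ adjoint B + adjoint B ∘ₗ B
        + adjoint q ∘ₗ q + adjoint p ∘ₗ p) x, x⟫_ℂ
        = ((‖adjoint A x‖^2 + ‖A x‖^2 + ‖adjoint B x‖^2 + ‖B x‖^2
            + ‖q x‖^2 + ‖p x‖^2 : ℝ) : ℂ) := by
      simp only [LinearMap.add_apply, inner_add_left]
      rw [show (A ∘ₗ adjoint A) x = (adjoint (adjoint A) ∘ₗ adjoint A) x by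
            rw [adjoint_adjoint],
          show (B ∘ₗ adjoint B) x = (adjoint (adjoint B) ∘ₗ adjoint B) x by
            rw [adjoint_adjoint]]
      rw [auxTT, auxTT, auxTT, auxTT, auxTT, auxTT]
      push_cast; ring
    rw [hexp, Complex.ofReal_eq_zero] at h0
    have e1 : ‖adjoint A x‖^2 = 0 := by
      nlinarith [sq_nonneg ‖A x‖, sq_nonneg ‖adjoint B x‖, sq_nonneg ‖B x‖,
        sq_nonneg ‖q x‖, sq_nonneg ‖p x‖]
    have e5 : ‖q x‖^2 = 0 := by
      nlinarith [sq_nonneg ‖A x‖, sq_nonneg ‖adjoint B x‖, sq_nonneg ‖B x‖,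
        sq_nonneg ‖adjoint A x‖, sq_nonneg ‖p x‖]
    have e6 : ‖p x‖^2 = 0 := by
      nlinarith [sq_nonneg ‖A x‖, sq_nonneg ‖adjoint B x‖, sq_nonneg ‖B x‖,
        sq_nonneg ‖q x‖, sq_nonneg ‖adjoint A x‖]
    have hp0 : p x = 0 := by
      simpa using (pow_eq_zero_iff two_ne_zero).mp e6
    have hq0 : q x = 0 := by
      simpa using (pow_eq_zero_iff two_ne_zero).mp e5
    have hA0 : adjoint A x = 0 := by
      simpa using (pow_eq_zero_iff two_ne_zero).mp e1
    simp only [Submodule.mem_inf, mem_ker]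
    exact ⟨⟨hp0, hq0⟩, hA0⟩
  · intro hx
    simp only [Submodule.mem_inf, mem_ker] at hx
    obtain ⟨⟨hp0, hq0⟩, hA0⟩ := hx
    have hA0' : adjoint q (adjoint p x) = 0 := by
      simpa [hA, adjoint_comp] using hA0
    simp [mem_ker, LinearMap.add_apply, comp_apply, hA, hB, adjoint_comp, adjoint_adjoint,
      hp0, hq0, hA0', map_zero]
end

section
/- Under the Kähler identities, all harmonic spaces coincide: ker Δ_∂ = ker Δ_∂̄ = ker Δ_d = ker Δ_BC = ker Δ_A, where Δ_∂ := ∂∂* + ∂*∂, Δ_∂̄ := ∂̄∂̄* + ∂̄*∂̄, Δ_d := dd* + d*d with d := ∂ + ∂̄, Δ_BC := (∂∂̄)(∂∂̄)* + (∂∂̄)*(∂∂̄) + (∂̄*∂)(∂̄*∂)* + (∂̄*∂)*(∂̄*∂) + ∂̄*∂̄ + ∂*∂, and Δ_A := ∂∂* + ∂̄∂̄* + (∂∂̄)*(∂∂̄) + (∂∂̄)(∂∂̄)* + (∂̄∂*)*(∂̄∂*) + (∂̄∂*)(∂̄∂*)*. -/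
open LinearMap

section Helpers

variable {V : Type*} [NormedAddCommGroup V] [InnerProductSpace ℂ V] [FiniteDimensional ℂ V]

local notation "⟪" x ", " y "⟫" => @inner ℂ _ _ x y

private lemma cancelAux (A : V →ₗ[ℂ] V) (x : V) (h : adjoint A (A x) = 0) : A x = 0 := by
  have h2 : ⟪adjoint A (A x), x⟫ = ⟪A x, A x⟫ := adjoint_inner_left A x (A x)
  rw [h, inner_zero_left] at h2
  exact inner_self_eq_zero.mp h2.symm

private lemma ker2Aux (A B : V →ₗ[ℂ] V) (x : V)
    (h : (adjoint A ∘ₗ A + adjoint B ∘ₗ B) x = 0) :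
    A x = 0 ∧ B x = 0 := by
  have h' : ((‖A x‖ ^ 2 + ‖B x‖ ^ 2 : ℝ) : ℂ) = 0 := by
    have := congrArg (fun y => ⟪y, x⟫) h
    simp only [LinearMap.add_apply, comp_apply, inner_add_left, adjoint_inner_left, inner_zero_left] at this
    rw [← this]
    simp [inner_self_eq_norm_sq_to_K]
  have hr : ‖A x‖ ^ 2 + ‖B x‖ ^ 2 = 0 := by exact_mod_cast h'
  constructor
  · have : ‖A x‖ = 0 := by nlinarith [sq_nonneg ‖B x‖, norm_nonneg (A x)]
    exact norm_eq_zero.mp this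
  · have : ‖B x‖ = 0 := by nlinarith [sq_nonneg ‖A x‖, norm_nonneg (B x)]
    exact norm_eq_zero.mp this

private lemma ker6Aux (A B C D E F : V →ₗ[ℂ] V) (x : V)
    (h : (adjoint A ∘ₗ A + adjoint B ∘ₗ B + adjoint C ∘ₗ C + adjoint D ∘ₗ D
        + adjoint E ∘ₗ E + adjoint F ∘ₗ F) x = 0) :
    A x = 0 ∧ B x = 0 ∧ C x = 0 ∧ D x = 0 ∧ E x = 0 ∧ F x = 0 := by
  have h' : ((‖A x‖ ^ 2 + ‖B x‖ ^ 2 + ‖C x‖ ^ 2 + ‖D x‖ ^ 2 + ‖E x‖ ^ 2 + ‖F x‖ ^ 2 : ℝ) : ℂ)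
      = 0 := by
    have := congrArg (fun y => ⟪y, x⟫) h
    simp only [LinearMap.add_apply, comp_apply, inner_add_left, adjoint_inner_left, inner_zero_left] at this
    rw [← this]
    simp [inner_self_eq_norm_sq_to_K]
  have hr : ‖A x‖ ^ 2 + ‖B x‖ ^ 2 + ‖C x‖ ^ 2 + ‖D x‖ ^ 2 + ‖E x‖ ^ 2 + ‖F x‖ ^ 2 = 0 := by
    exact_mod_cast h'
  have hA : ‖A x‖ = 0 := by nlinarith [sq_nonneg ‖B x‖, sq_nonneg ‖C x‖, sq_nonneg ‖D x‖, sq_nonneg ‖E x‖, sq_nonneg ‖F x‖, norm_nonneg (A x)]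
  have hB : ‖B x‖ = 0 := by nlinarith [sq_nonneg ‖A x‖, sq_nonneg ‖C x‖, sq_nonneg ‖D x‖, sq_nonneg ‖E x‖, sq_nonneg ‖F x‖, norm_nonneg (B x)]
  have hC : ‖C x‖ = 0 := by nlinarith [sq_nonneg ‖A x‖, sq_nonneg ‖B x‖, sq_nonneg ‖D x‖, sq_nonneg ‖E x‖, sq_nonneg ‖F x‖, norm_nonneg (C x)]
  have hD : ‖D x‖ = 0 := by nlinarith [sq_nonneg ‖A x‖, sq_nonneg ‖B x‖, sq_nonneg ‖C x‖, sq_nonneg ‖E x‖, sq_nonneg ‖F x‖, norm_nonneg (D x)]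
  have hE : ‖E x‖ = 0 := by nlinarith [sq_nonneg ‖A x‖, sq_nonneg ‖B x‖, sq_nonneg ‖C x‖, sq_nonneg ‖D x‖, sq_nonneg ‖F x‖, norm_nonneg (E x)]
  have hF : ‖F x‖ = 0 := by nlinarith [sq_nonneg ‖A x‖, sq_nonneg ‖B x‖, sq_nonneg ‖C x‖, sq_nonneg ‖D x‖, sq_nonneg ‖E x‖, norm_nonneg (F x)]
  exact ⟨norm_eq_zero.mp hA, norm_eq_zero.mp hB, norm_eq_zero.mp hC,
    norm_eq_zero.mp hD, norm_eq_zero.mp hE, norm_eq_zero.mp hF⟩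

end Helpers

set_option maxHeartbeats 1000000 in
/-- Under the Kähler identities, all harmonic spaces coincide:
`ker Δ_∂ = ker Δ_∂̄ = ker Δ_d = ker Δ_BC = ker Δ_A`. -/
theorem stmt15 {V : Type*} [NormedAddCommGroup V] [InnerProductSpace ℂ V]
    [FiniteDimensional ℂ V]
    (p q Lam : V →ₗ[ℂ] V)
    (hp : p ∘ₗ p = 0) (hq : q ∘ₗ q = 0) (hpq : p ∘ₗ q + q ∘ₗ p = 0)
    (hk1 : Lam ∘ₗ p - p ∘ₗ Lam = Complex.I • adjoint q)
    (hk2 : Lam ∘ₗ q - q ∘ₗ Lam = (-Complex.I) • adjoint p) :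
    ker (p ∘ₗ adjoint p + adjoint p ∘ₗ p) = ker (q ∘ₗ adjoint q + adjoint q ∘ₗ q) ∧
    ker (q ∘ₗ adjoint q + adjoint q ∘ₗ q)
      = ker ((p + q) ∘ₗ adjoint (p + q) + adjoint (p + q) ∘ₗ (p + q)) ∧
    ker ((p + q) ∘ₗ adjoint (p + q) + adjoint (p + q) ∘ₗ (p + q))
      = ker ((p ∘ₗ q) ∘ₗ adjoint (p ∘ₗ q) + adjoint (p ∘ₗ q) ∘ₗ (p ∘ₗ q)
          + (adjoint q ∘ₗ p) ∘ₗ adjoint (adjoint q ∘ₗ p)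
          + adjoint (adjoint q ∘ₗ p) ∘ₗ (adjoint q ∘ₗ p)
          + adjoint q ∘ₗ q + adjoint p ∘ₗ p) ∧
    ker ((p ∘ₗ q) ∘ₗ adjoint (p ∘ₗ q) + adjoint (p ∘ₗ q) ∘ₗ (p ∘ₗ q)
          + (adjoint q ∘ₗ p) ∘ₗ adjoint (adjoint q ∘ₗ p)
          + adjoint (adjoint q ∘ₗ p) ∘ₗ (adjoint q ∘ₗ p)
          + adjoint q ∘ₗ q + adjoint p ∘ₗ p)
      = ker (p ∘ₗ adjoint p + q ∘ₗ adjoint q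
          + adjoint (p ∘ₗ q) ∘ₗ (p ∘ₗ q) + (p ∘ₗ q) ∘ₗ adjoint (p ∘ₗ q)
          + adjoint (q ∘ₗ adjoint p) ∘ₗ (q ∘ₗ adjoint p)
          + (q ∘ₗ adjoint p) ∘ₗ adjoint (q ∘ₗ adjoint p)) := by
  have hq' : adjoint q = (-Complex.I) • (Lam ∘ₗ p - p ∘ₗ Lam) := by
    rw [hk1, smul_smul]; norm_num
  have hp' : adjoint p = Complex.I • (Lam ∘ₗ q - q ∘ₗ Lam) := by
    rw [hk2, smul_smul]; norm_num
  have hpq' : p ∘ₗ q = -(q ∘ₗ p) := eq_neg_of_add_eq_zero_left hpq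
  have hpqx : ∀ y, p (q y) = -(q (p y)) := fun y => by
    simpa using LinearMap.ext_iff.mp hpq' y
  -- anticommutation of p with adjoint q
  have anticomm1 : p ∘ₗ adjoint q + adjoint q ∘ₗ p = 0 := by
    rw [hq']
    simp only [comp_smul, smul_comp, comp_sub, sub_comp, ← comp_assoc, hp]
    simp [comp_assoc, hp]
  have a1 : ∀ y, p (adjoint q y) = -(adjoint q (p y)) := fun y => by
    have h := LinearMap.ext_iff.mp anticomm1 y
    simp only [LinearMap.add_apply, comp_apply, LinearMap.zero_apply] at h
    exact eq_neg_of_add_eq_zero_left h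
  -- anticommutation of q with adjoint p (adjoint of anticomm1)
  have anticomm2 : q ∘ₗ adjoint p + adjoint p ∘ₗ q = 0 := by
    have h := congrArg (fun f : V →ₗ[ℂ] V => adjoint f) anticomm1
    simp only [map_add, adjoint_comp, adjoint_adjoint, map_zero] at h
    first
      | exact h
      | (rw [add_comm] at h; exact h)
  have a2 : ∀ y, q (adjoint p y) = -(adjoint p (q y)) := fun y => by
    have h := LinearMap.ext_iff.mp anticomm2 y
    simp only [LinearMap.add_apply, comp_apply, LinearMap.zero_apply] at h
    exact eq_neg_of_add_eq_zero_left h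
  -- anticommutation of the adjoints (adjoint of hpq)
  have anticomm3 : adjoint p ∘ₗ adjoint q + adjoint q ∘ₗ adjoint p = 0 := by
    have h := congrArg (fun f : V →ₗ[ℂ] V => adjoint f) hpq
    simp only [map_add, adjoint_comp, map_zero] at h
    first
      | exact h
      | (rw [add_comm] at h; exact h)
  have a3 : ∀ y, adjoint p (adjoint q y) = -(adjoint q (adjoint p y)) := fun y => by
    have h := LinearMap.ext_iff.mp anticomm3 y
    simp only [LinearMap.add_apply, comp_apply, LinearMap.zero_apply] at h
    exact eq_neg_of_add_eq_zero_left h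
  -- the key Kähler consequence: the two Laplacians agree
  have lapeq : p ∘ₗ adjoint p + adjoint p ∘ₗ p = q ∘ₗ adjoint q + adjoint q ∘ₗ q := by
    ext x
    simp only [hp', hq', LinearMap.add_apply, comp_apply, LinearMap.smul_apply, LinearMap.sub_apply, map_sub, map_smul,
      map_neg, smul_sub, hpqx]
    module
  -- kernel-membership criteria
  have cancelP : ∀ x : V, p (adjoint p x) = 0 → adjoint p x = 0 := fun x h =>
    cancelAux (adjoint p) x (by simpa [adjoint_adjoint] using h)
  have cancelQ : ∀ x : V, q (adjoint q x) = 0 → adjoint q x = 0 := fun x h =>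
    cancelAux (adjoint q) x (by simpa [adjoint_adjoint] using h)
  have hKp : ∀ x : V, (p ∘ₗ adjoint p + adjoint p ∘ₗ p) x = 0 ↔
      (p x = 0 ∧ adjoint p x = 0) := by
    intro x
    constructor
    · intro h
      have h2 := ker2Aux (adjoint p) p x (by
        simpa only [adjoint_adjoint] using h)
      exact ⟨h2.2, h2.1⟩
    · rintro ⟨h1, h2⟩
      simp [LinearMap.add_apply, comp_apply, h1, h2]
  have hKq : ∀ x : V, (q ∘ₗ adjoint q + adjoint q ∘ₗ q) x = 0 ↔
      (q x = 0 ∧ adjoint q x = 0) := by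
    intro x
    constructor
    · intro h
      have h2 := ker2Aux (adjoint q) q x (by
        simpa only [adjoint_adjoint] using h)
      exact ⟨h2.2, h2.1⟩
    · rintro ⟨h1, h2⟩
      simp [LinearMap.add_apply, comp_apply, h1, h2]
  -- transfer of harmonicity between p and q
  have transfer : ∀ x : V, (p x = 0 ∧ adjoint p x = 0) ↔ (q x = 0 ∧ adjoint q x = 0) := by
    intro x
    rw [← hKp, ← hKq, lapeq]
  -- the harmonic predicate
  have c1 : ∀ x : V, (p ∘ₗ adjoint p + adjoint p ∘ₗ p) x = 0 ↔
      (p x = 0 ∧ adjoint p x = 0 ∧ q x = 0 ∧ adjoint q x = 0) := by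
    intro x
    rw [hKp]
    constructor
    · intro h
      obtain ⟨h3, h4⟩ := (transfer x).mp h
      exact ⟨h.1, h.2, h3, h4⟩
    · rintro ⟨h1, h2, _, _⟩; exact ⟨h1, h2⟩
  have c1' : ∀ x : V, (q ∘ₗ adjoint q + adjoint q ∘ₗ q) x = 0 ↔
      (p x = 0 ∧ adjoint p x = 0 ∧ q x = 0 ∧ adjoint q x = 0) := by
    intro x
    rw [← lapeq]
    exact c1 x
  -- the d-Laplacian is twice the ∂-Laplacian
  have hdd : (p + q) ∘ₗ adjoint (p + q) + adjoint (p + q) ∘ₗ (p + q)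
      = (2 : ℂ) • (p ∘ₗ adjoint p + adjoint p ∘ₗ p) := by
    have hadd : adjoint (p + q) = adjoint p + adjoint q := map_add _ p q
    rw [hadd]
    have expand : (p + q) ∘ₗ (adjoint p + adjoint q) + (adjoint p + adjoint q) ∘ₗ (p + q)
        = (p ∘ₗ adjoint p + adjoint p ∘ₗ p) + (q ∘ₗ adjoint q + adjoint q ∘ₗ q)
          + (p ∘ₗ adjoint q + adjoint q ∘ₗ p) + (q ∘ₗ adjoint p + adjoint p ∘ₗ q) := by
      simp only [add_comp, comp_add]
      abel
    rw [expand, anticomm1, anticomm2, ← lapeq, two_smul]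
    abel
  have c2 : ∀ x : V,
      ((p + q) ∘ₗ adjoint (p + q) + adjoint (p + q) ∘ₗ (p + q)) x = 0 ↔
      (p x = 0 ∧ adjoint p x = 0 ∧ q x = 0 ∧ adjoint q x = 0) := by
    intro x
    rw [hdd, ← c1 x]
    simp only [LinearMap.smul_apply, smul_eq_zero]
    constructor
    · rintro (h | h)
      · exact absurd h two_ne_zero
      · exact h
    · intro h; exact Or.inr h
  -- Bott-Chern Laplacian
  have c3 : ∀ x : V,
      ((p ∘ₗ q) ∘ₗ adjoint (p ∘ₗ q) + adjoint (p ∘ₗ q) ∘ₗ (p ∘ₗ q)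
          + (adjoint q ∘ₗ p) ∘ₗ adjoint (adjoint q ∘ₗ p)
          + adjoint (adjoint q ∘ₗ p) ∘ₗ (adjoint q ∘ₗ p)
          + adjoint q ∘ₗ q + adjoint p ∘ₗ p) x = 0 ↔
      (p x = 0 ∧ adjoint p x = 0 ∧ q x = 0 ∧ adjoint q x = 0) := by
    intro x
    constructor
    · intro h
      have h6 := ker6Aux (adjoint (p ∘ₗ q)) (p ∘ₗ q) (adjoint (adjoint q ∘ₗ p))
        (adjoint q ∘ₗ p) q p x (by simpa only [adjoint_adjoint] using h)
      obtain ⟨g1, g2, g3, g4, g5, g6⟩ := h6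
      have g1' : adjoint q (adjoint p x) = 0 := by
        have he : adjoint (p ∘ₗ q) x = adjoint q (adjoint p x) := by
          rw [adjoint_comp]; rfl
        rwa [he] at g1
      have hPx : adjoint p x = 0 := by
        have hy1 : q (adjoint p x) = 0 := by rw [a2, g5, map_zero, neg_zero]
        have hy := (transfer (adjoint p x)).mpr ⟨hy1, g1'⟩
        exact cancelP x hy.1
      have hQx : adjoint q x = 0 := by
        have hz1 : p (adjoint q x) = 0 := by rw [a1, g6, map_zero, neg_zero]
        have hz2 : adjoint p (adjoint q x) = 0 := by rw [a3, g1', neg_zero]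
        have hz := (transfer (adjoint q x)).mp ⟨hz1, hz2⟩
        exact cancelQ x hz.1
      exact ⟨g6, hPx, g5, hQx⟩
    · rintro ⟨h1, h2, h3, h4⟩
      simp only [LinearMap.add_apply, comp_apply, adjoint_comp, adjoint_adjoint, h1, h2, h3, h4,
        map_zero, add_zero, zero_add]
  -- Aeppli Laplacian
  have c4 : ∀ x : V,
      (p ∘ₗ adjoint p + q ∘ₗ adjoint q
          + adjoint (p ∘ₗ q) ∘ₗ (p ∘ₗ q) + (p ∘ₗ q) ∘ₗ adjoint (p ∘ₗ q)
          + adjoint (q ∘ₗ adjoint p) ∘ₗ (q ∘ₗ adjoint p)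
          + (q ∘ₗ adjoint p) ∘ₗ adjoint (q ∘ₗ adjoint p)) x = 0 ↔
      (p x = 0 ∧ adjoint p x = 0 ∧ q x = 0 ∧ adjoint q x = 0) := by
    intro x
    constructor
    · intro h
      have h6 := ker6Aux (adjoint p) (adjoint q) (p ∘ₗ q) (adjoint (p ∘ₗ q))
        (q ∘ₗ adjoint p) (adjoint (q ∘ₗ adjoint p)) x
        (by simpa only [adjoint_adjoint] using h)
      obtain ⟨g1, g2, g3, g4, g5, g6⟩ := h6
      have g3' : p (q x) = 0 := g3
      have hpx : p x = 0 := by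
        have hy1 : q (p x) = 0 := by
          have hh := hpqx x
          rw [g3'] at hh
          exact (neg_eq_zero.mp hh.symm)
        have hy2 : adjoint q (p x) = 0 := by
          have hh := a1 x
          rw [g2, map_zero] at hh
          exact (neg_eq_zero.mp hh.symm)
        have hy := (transfer (p x)).mpr ⟨hy1, hy2⟩
        exact cancelAux p x hy.2
      have hqx : q x = 0 := by
        have hz1 : p (q x) = 0 := g3'
        have hz2 : adjoint p (q x) = 0 := by
          have hh := a2 x
          rw [g1, map_zero] at hh
          exact (neg_eq_zero.mp hh.symm)
        have hz := (transfer (q x)).mp ⟨hz1, hz2⟩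
        exact cancelAux q x hz.2
      exact ⟨hpx, g1, hqx, g2⟩
    · rintro ⟨h1, h2, h3, h4⟩
      simp only [LinearMap.add_apply, comp_apply, adjoint_comp, adjoint_adjoint, h1, h2, h3, h4,
        map_zero, add_zero, zero_add]
  refine ⟨?_, ?_, ?_, ?_⟩
  · ext x
    rw [mem_ker, mem_ker, c1, c1']
  · ext x
    rw [mem_ker, mem_ker, c1', c2]
  · ext x
    rw [mem_ker, mem_ker, c2, c3]
  · ext x
    rw [mem_ker, mem_ker, c3, c4]
end

section
/- Under the Kähler identities, the ∂∂̄-Lemma holds: ker ∂ ∩ ker ∂̄ ∩ (im ∂ + im ∂̄) = im(∂∘∂̄). In particular, if x ∈ V satisfies ∂x = 0, ∂̄x = 0 and x = ∂β + ∂̄γ for some β, γ ∈ V, then x = ∂∂̄u for some u ∈ V. -/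
open LinearMap

set_option maxHeartbeats 1000000 in
/-- Under the Kähler identities, the `∂∂̄`-Lemma holds:
`ker ∂ ∩ ker ∂̄ ∩ (im ∂ + im ∂̄) = im(∂∘∂̄)`.  In particular, if `∂x = 0`,
`∂̄x = 0` and `x = ∂β + ∂̄γ`, then `x = ∂∂̄u` for some `u`. -/
theorem stmt16 {V : Type*} [NormedAddCommGroup V] [InnerProductSpace ℂ V]
    [FiniteDimensional ℂ V]
    (p q Lam : V →ₗ[ℂ] V)
    (hp : p ∘ₗ p = 0) (hq : q ∘ₗ q = 0) (hpq : p ∘ₗ q + q ∘ₗ p = 0)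
    (hk1 : Lam ∘ₗ p - p ∘ₗ Lam = Complex.I • adjoint q)
    (hk2 : Lam ∘ₗ q - q ∘ₗ Lam = (-Complex.I) • adjoint p) :
    (ker p ⊓ ker q ⊓ (range p ⊔ range q) = range (p ∘ₗ q)) ∧
    (∀ x β γ : V, p x = 0 → q x = 0 → x = p β + q γ → ∃ u : V, x = p (q u)) := by
  have hp' : p * p = 0 := hp
  have hq' : q * q = 0 := hq
  have hpq' : p * q + q * p = 0 := hpq
  have hk1' : Lam * p - p * Lam = Complex.I • adjoint q := hk1
  have hk2' : Lam * q - q * Lam = (-Complex.I) • adjoint p := hk2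
  have hqp : q * p = -(p * q) := by linear_combination (norm := noncomm_ring) hpq'
  -- anticommutation of the twisted operators with the adjoints
  have hBp : p * adjoint q = -(adjoint q * p) := by
    have h : Complex.I • (adjoint q * p + p * adjoint q) = Lam * (p*p) - (p*p) * Lam := by
      rw [smul_add, ← smul_mul_assoc, ← mul_smul_comm, ← hk1']; noncomm_ring
    rw [hp'] at h
    simp only [mul_zero, zero_mul, sub_zero, sub_self] at h
    have h2 : adjoint q * p + p * adjoint q = 0 :=
      (smul_eq_zero.mp h).resolve_left Complex.I_ne_zero
    linear_combination (norm := noncomm_ring) h2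
  have hAq : q * adjoint p = -(adjoint p * q) := by
    have h : (-Complex.I) • (adjoint p * q + q * adjoint p) = Lam * (q*q) - (q*q) * Lam := by
      rw [smul_add, ← smul_mul_assoc, ← mul_smul_comm, ← hk2']; noncomm_ring
    rw [hq'] at h
    simp only [mul_zero, zero_mul, sub_zero, sub_self] at h
    have h2 : adjoint p * q + q * adjoint p = 0 :=
      (smul_eq_zero.mp h).resolve_left (neg_ne_zero.mpr Complex.I_ne_zero)
    linear_combination (norm := noncomm_ring) h2
  set D : V →ₗ[ℂ] V := p * adjoint p + adjoint p * p with hDdef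
  -- the two Laplacians agree
  have hDeq : D = q * adjoint q + adjoint q * q := by
    have e1 : Complex.I • adjoint p = q * Lam - Lam * q := by
      have h0 : -(Complex.I • adjoint p) = Lam * q - q * Lam := by
        rw [← neg_smul]; exact hk2'.symm
      have h1 := neg_eq_iff_eq_neg.mp h0
      rw [h1]; noncomm_ring
    have e2 : Complex.I • adjoint q = Lam * p - p * Lam := hk1'.symm
    have h : Complex.I • D - Complex.I • (q * adjoint q + adjoint q * q)
        = (p*q + q*p) * Lam - Lam * (p*q + q*p) := by
      rw [hDdef, smul_add, smul_add,
        ← mul_smul_comm Complex.I p (adjoint p),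
        ← smul_mul_assoc Complex.I (adjoint p) p,
        ← mul_smul_comm Complex.I q (adjoint q),
        ← smul_mul_assoc Complex.I (adjoint q) q, e1, e2]
      noncomm_ring
    rw [hpq'] at h
    simp only [zero_mul, mul_zero, sub_zero, sub_self] at h
    exact smul_right_injective (V →ₗ[ℂ] V) Complex.I_ne_zero (sub_eq_zero.mp h)
  -- D commutes with p and q
  have hDp : D * p = p * D := by
    have h : D * p - p * D = adjoint p * (p*p) - (p*p) * adjoint p := by
      rw [hDdef]; noncomm_ring
    rw [hp'] at h
    simp only [mul_zero, zero_mul, sub_zero, sub_self] at h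
    linear_combination (norm := noncomm_ring) h
  have hDq : D * q = q * D := by
    have h : D * q - q * D = adjoint q * (q*q) - (q*q) * adjoint q := by
      rw [hDeq]; noncomm_ring
    rw [hq'] at h
    simp only [mul_zero, zero_mul, sub_zero, sub_self] at h
    linear_combination (norm := noncomm_ring) h
  have hDpq : D * (p * q) = (p * q) * D := by
    calc D * (p * q) = (D * p) * q := by noncomm_ring
    _ = p * (D * q) := by rw [hDp]; noncomm_ring
    _ = (p * q) * D := by rw [hDq]; noncomm_ring
  -- D is self-adjoint
  have hadjD : adjoint D = D := by
    rw [hDdef, map_add, Module.End.mul_eq_comp, Module.End.mul_eq_comp, adjoint_comp, adjoint_comp,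
      adjoint_adjoint]
  -- kernel of D
  have hker1 : ∀ x : V, D x = 0 → p x = 0 ∧ adjoint p x = 0 := by
    intro x hx
    have h2 : (inner ℂ (p (adjoint p x)) x : ℂ) + inner ℂ (adjoint p (p x)) x = 0 := by
      rw [← inner_add_left]
      have hDx : p (adjoint p x) + adjoint p (p x) = D x := rfl
      rw [hDx, hx, inner_zero_left]
    rw [show (inner ℂ (p (adjoint p x)) x : ℂ) = inner ℂ (adjoint p x) (adjoint p x) from
      (adjoint_inner_right p (adjoint p x) x).symm,
      adjoint_inner_left p x (p x),
      inner_self_eq_norm_sq_to_K, inner_self_eq_norm_sq_to_K] at h2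
    have h3 : (‖adjoint p x‖^2 : ℝ) + (‖p x‖^2 : ℝ) = 0 := by
      have h4 : ((‖adjoint p x‖^2 + ‖p x‖^2 : ℝ) : ℂ) = 0 := by push_cast; exact h2
      exact_mod_cast h4
    constructor
    · rw [← norm_eq_zero]; nlinarith [norm_nonneg (p x), norm_nonneg (adjoint p x),
        sq_nonneg (‖p x‖), sq_nonneg (‖adjoint p x‖)]
    · rw [← norm_eq_zero]; nlinarith [norm_nonneg (p x), norm_nonneg (adjoint p x),
        sq_nonneg (‖p x‖), sq_nonneg (‖adjoint p x‖)]
  have hker2 : ∀ x : V, D x = 0 → q x = 0 ∧ adjoint q x = 0 := by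
    intro x hx
    have h2 : (inner ℂ (q (adjoint q x)) x : ℂ) + inner ℂ (adjoint q (q x)) x = 0 := by
      rw [← inner_add_left]
      have hDx : q (adjoint q x) + adjoint q (q x) = D x := by rw [hDeq]; rfl
      rw [hDx, hx, inner_zero_left]
    rw [show (inner ℂ (q (adjoint q x)) x : ℂ) = inner ℂ (adjoint q x) (adjoint q x) from
      (adjoint_inner_right q (adjoint q x) x).symm,
      adjoint_inner_left q x (q x),
      inner_self_eq_norm_sq_to_K, inner_self_eq_norm_sq_to_K] at h2
    have h3 : (‖adjoint q x‖^2 : ℝ) + (‖q x‖^2 : ℝ) = 0 := by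
      have h4 : ((‖adjoint q x‖^2 + ‖q x‖^2 : ℝ) : ℂ) = 0 := by push_cast; exact h2
      exact_mod_cast h4
    constructor
    · rw [← norm_eq_zero]; nlinarith [norm_nonneg (q x), norm_nonneg (adjoint q x)]
    · rw [← norm_eq_zero]; nlinarith [norm_nonneg (q x), norm_nonneg (adjoint q x)]
  -- ker D² = ker D, hence range D = range D²
  have hkerDD : ker (D ∘ₗ D) = ker D := by
    apply le_antisymm
    · intro y hy
      rw [mem_ker, comp_apply] at hy
      rw [mem_ker]
      have h1 : (inner ℂ (D y) (D y) : ℂ) = 0 := by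
        calc (inner ℂ (D y) (D y) : ℂ) = inner ℂ (adjoint D y) (D y) := by rw [hadjD]
        _ = inner ℂ y (D (D y)) := adjoint_inner_left D (D y) y
        _ = 0 := by rw [hy, inner_zero_right]
      exact inner_self_eq_zero.mp h1
    · intro y hy
      rw [mem_ker] at hy
      rw [mem_ker, comp_apply, hy, map_zero]
  have hrange : range D = range (D ∘ₗ D) := by
    refine (Submodule.eq_of_le_of_finrank_le ?_ ?_).symm
    · rintro _ ⟨y, rfl⟩
      exact ⟨D y, rfl⟩
    · have r1 := finrank_range_add_finrank_ker D
      have r2 := finrank_range_add_finrank_ker (D ∘ₗ D)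
      rw [hkerDD] at r2
      omega
  -- Hodge decomposition
  have hodge : ∀ β : V, ∃ y : V, D (β - D y) = 0 := by
    intro β
    have hmem : D β ∈ range (D ∘ₗ D) := by rw [← hrange]; exact ⟨β, rfl⟩
    obtain ⟨y, hy⟩ := hmem
    refine ⟨y, ?_⟩
    rw [map_sub, ← comp_apply, hy, sub_self]
  -- the key operator identities
  have hPD : p * D = p * q * adjoint q - adjoint q * (p * q) := by
    rw [hDeq]
    calc p * (q * adjoint q + adjoint q * q)
        = p * q * adjoint q + (p * adjoint q) * q := by noncomm_ring
    _ = p * q * adjoint q - adjoint q * (p * q) := by rw [hBp]; noncomm_ring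
  have hQD : q * D = adjoint p * (p * q) - (p * q) * adjoint p := by
    rw [hDdef]
    calc q * (p * adjoint p + adjoint p * p)
        = (q * p) * adjoint p + (q * adjoint p) * p := by noncomm_ring
    _ = (-(p * q)) * adjoint p + (-(adjoint p * q)) * p := by rw [hqp, hAq]
    _ = -((p * q) * adjoint p) - adjoint p * (q * p) := by noncomm_ring
    _ = -((p * q) * adjoint p) - adjoint p * (-(p * q)) := by rw [hqp]
    _ = adjoint p * (p * q) - (p * q) * adjoint p := by noncomm_ring
  -- the main statement
  have key : ∀ x β γ : V, p x = 0 → q x = 0 → x = p β + q γ → ∃ u : V, x = p (q u) := by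
    intro x β γ hpx hqx hx
    have hqq : ∀ v, q (q v) = 0 := fun v => by
      have := DFunLike.congr_fun hq' v; simpa [Module.End.mul_apply] using this
    have hpp : ∀ v, p (p v) = 0 := fun v => by
      have := DFunLike.congr_fun hp' v; simpa [Module.End.mul_apply] using this
    have hqpβ : q (p β) = 0 := by
      have h := congrArg q hx
      rw [map_add, hqx, hqq] at h
      have := h.symm
      simpa using this
    have hpqβ : (p * q) β = 0 := by
      have h := DFunLike.congr_fun hqp β
      rw [Module.End.mul_apply, LinearMap.neg_apply, Module.End.mul_apply, hqpβ] at h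
      simpa using h.symm
    have hpqγ : (p * q) γ = 0 := by
      have h := congrArg p hx
      rw [map_add, hpx, hpp] at h
      rw [Module.End.mul_apply]
      have := h.symm
      simpa using this
    obtain ⟨y1, hy1⟩ := hodge β
    obtain ⟨y2, hy2⟩ := hodge γ
    have hp1 : p (β - D y1) = 0 := (hker1 _ hy1).1
    have hq1 : q (β - D y1) = 0 := (hker2 _ hy1).1
    have hq2 : q (γ - D y2) = 0 := (hker2 _ hy2).1
    -- D kills (p*q) y1 and (p*q) y2
    have hDpq1 : D ((p * q) y1) = 0 := by
      have h1 : D ((p * q) y1) = (p * q) (D y1) := by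
        have := DFunLike.congr_fun hDpq y1; simpa [Module.End.mul_apply] using this
      have h2 : (p * q) (D y1) = (p * q) β - (p * q) (β - D y1) := by
        rw [map_sub]; abel
      rw [h1, h2, hpqβ, Module.End.mul_apply, hq1, map_zero, sub_zero]
    have hDpq2 : D ((p * q) y2) = 0 := by
      have h1 : D ((p * q) y2) = (p * q) (D y2) := by
        have := DFunLike.congr_fun hDpq y2; simpa [Module.End.mul_apply] using this
      have h2 : (p * q) (D y2) = (p * q) γ - (p * q) (γ - D y2) := by
        rw [map_sub]; abel
      rw [h1, h2, hpqγ, Module.End.mul_apply, hq2, map_zero, sub_zero]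
    have hB1 : adjoint q (p (q y1)) = 0 := by
      have h := (hker2 _ hDpq1).2
      simpa [Module.End.mul_apply] using h
    have hA2 : adjoint p (p (q y2)) = 0 := by
      have h := (hker1 _ hDpq2).2
      simpa [Module.End.mul_apply] using h
    -- compute p β and q γ
    have hpβ : p β = p (q (adjoint q y1)) := by
      have e : p β = p (β - D y1) + p (D y1) := by rw [map_sub]; abel
      rw [e, hp1, zero_add]
      have e2 : p (D y1) = (p * D) y1 := rfl
      rw [e2, hPD]
      simp only [LinearMap.sub_apply, Module.End.mul_apply, hB1, sub_zero]
    have hqγ : q γ = -(p (q (adjoint p y2))) := by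
      have e : q γ = q (γ - D y2) + q (D y2) := by rw [map_sub]; abel
      rw [e, hq2, zero_add]
      have e2 : q (D y2) = (q * D) y2 := rfl
      rw [e2, hQD]
      simp only [LinearMap.sub_apply, Module.End.mul_apply, hA2, zero_sub]
    refine ⟨adjoint q y1 - adjoint p y2, ?_⟩
    rw [hx, hpβ, hqγ, map_sub, map_sub]
    abel
  refine ⟨?_, key⟩
  have hqq : ∀ v : V, q (q v) = 0 := fun v => by
    have h := DFunLike.congr_fun hq' v; simpa [Module.End.mul_apply] using h
  have hpp : ∀ v : V, p (p v) = 0 := fun v => by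
    have h := DFunLike.congr_fun hp' v; simpa [Module.End.mul_apply] using h
  apply le_antisymm
  · intro x hx
    rw [Submodule.mem_inf, Submodule.mem_inf, mem_ker, mem_ker] at hx
    obtain ⟨⟨hx1, hx2⟩, hx3⟩ := hx
    obtain ⟨a, ha, b, hb, hab⟩ := Submodule.mem_sup.mp hx3
    obtain ⟨β, rfl⟩ := ha
    obtain ⟨γ, rfl⟩ := hb
    obtain ⟨u, hu⟩ := key x β γ hx1 hx2 hab.symm
    exact ⟨u, hu.symm⟩
  · rintro _ ⟨u, rfl⟩
    rw [Submodule.mem_inf, Submodule.mem_inf, mem_ker, mem_ker]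
    refine ⟨⟨?_, ?_⟩, ?_⟩
    · rw [comp_apply]
      exact hpp (q u)
    · rw [comp_apply]
      have h := DFunLike.congr_fun hqp (q u)
      simp only [Module.End.mul_apply, LinearMap.neg_apply] at h
      rw [h, hqq u, map_zero, neg_zero]
    · exact Submodule.mem_sup_left ⟨q u, rfl⟩
end
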